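/- arXiv:2505.03648 — 2 statements merged into one kernel-verified Lean document; each statement's English description precedes it below -/
import Mathlib

section
/- For the Hopfield dynamics ẋ = W g(x) - x + b with g(x) = ∇L(x), symmetric W, and positive semidefinite Hessian ∇²L(x), the energy E_H(x) = (x - b)ᵀ g(x) - L(x) - ½ g(x)ᵀ W g(x) satisfies dE_H/dt = -ẋᵀ ∇²L(x) ẋ ≤ 0 along trajectories. -/
open scoped Matrix


section HopfieldAux

open Matrix Asymptotics Filter Topology


lemma dot_bound {n : ℕ} (u v : Fin n → ℝ) : |u ⬝ᵥ v| ≤ ((n:ℝ)+1) * ‖u‖ * ‖v‖ := by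
  calc |u ⬝ᵥ v| ≤ ∑ i, |u i * v i| := Finset.abs_sum_le_sum_abs _ _
    _ ≤ ∑ _i : Fin n, ‖u‖ * ‖v‖ := by
        refine Finset.sum_le_sum fun i _ => ?_
        rw [abs_mul]
        exact mul_le_mul (norm_le_pi_norm u i) (norm_le_pi_norm v i) (abs_nonneg _) (norm_nonneg _)
    _ = (n:ℝ) * (‖u‖ * ‖v‖) := by simp [Finset.sum_const, mul_assoc]
    _ ≤ ((n:ℝ)+1) * ‖u‖ * ‖v‖ := by
        rw [mul_assoc]
        exact mul_le_mul_of_nonneg_right (by linarith) (by positivity)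

lemma hasDerivAt_dot {n : ℕ} {u v : ℝ → Fin n → ℝ} {u' v' : Fin n → ℝ} {t : ℝ}
    (hu : HasDerivAt u u' t) (hv : HasDerivAt v v' t) :
    HasDerivAt (fun s => u s ⬝ᵥ v s) (u' ⬝ᵥ v t + u t ⬝ᵥ v') t := by
  have h : ∀ i ∈ Finset.univ, HasDerivAt (fun s => u s i * v s i)
      (u' i * v t i + u t i * v' i) t :=
    fun i _ => (hasDerivAt_pi.mp hu i).mul (hasDerivAt_pi.mp hv i)
  simpa [dotProduct, Finset.sum_add_distrib] using HasDerivAt.fun_sum h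

lemma hasDerivAt_mulVec {n : ℕ} (W : Matrix (Fin n) (Fin n) ℝ) {p : ℝ → Fin n → ℝ}
    {p' : Fin n → ℝ} {t : ℝ} (hp : HasDerivAt p p' t) :
    HasDerivAt (fun s => W *ᵥ p s) (W *ᵥ p') t := by
  rw [hasDerivAt_pi]
  intro i
  have h : ∀ j ∈ Finset.univ, HasDerivAt (fun s => W i j * p s j) (W i j * p' j) t :=
    fun j _ => (hasDerivAt_pi.mp hp j).const_mul _
  simpa [Matrix.mulVec, dotProduct] using HasDerivAt.fun_sum h

variable {n : ℕ} {g : (Fin n → ℝ) → Fin n → ℝ} {Λ : (Fin n → ℝ) → Matrix (Fin n) (Fin n) ℝ}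

lemma gline_aux (hΛ : ∀ x v, HasDerivAt (fun t : ℝ => g (x + t • v)) (Λ x *ᵥ v) 0)
    (p u : Fin n → ℝ) (s : ℝ) :
    HasDerivAt (fun σ : ℝ => g (p + σ • u)) (Λ (p + s • u) *ᵥ u) s := by
  have h0 := hΛ (p + s • u) u
  have h1 : HasDerivAt (fun σ : ℝ => σ - s) 1 s := (hasDerivAt_id s).sub_const s
  have h2 := HasDerivAt.scomp (h := fun σ : ℝ => σ - s) (x := s) (by simpa using h0) h1
  have heq : ∀ σ : ℝ, p + s • u + (σ - s) • u = p + σ • u := fun σ => by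
    rw [sub_smul]; abel
  simpa [Function.comp_def, heq] using h2

lemma gdot_aux (hΛ : ∀ x v, HasDerivAt (fun t : ℝ => g (x + t • v)) (Λ x *ᵥ v) 0)
    (p u d : Fin n → ℝ) (s : ℝ) :
    HasDerivAt (fun σ : ℝ => g (p + σ • u) ⬝ᵥ d) ((Λ (p + s • u) *ᵥ u) ⬝ᵥ d) s := by
  have h : ∀ i ∈ Finset.univ, HasDerivAt (fun σ : ℝ => g (p + σ • u) i * d i)
      ((Λ (p + s • u) *ᵥ u) i * d i) s :=
    fun i _ => (hasDerivAt_pi.mp (gline_aux hΛ p u s) i).mul_const _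
  simpa [dotProduct] using HasDerivAt.fun_sum h

lemma mono_aux (hΛ : ∀ x v, HasDerivAt (fun t : ℝ => g (x + t • v)) (Λ x *ᵥ v) 0)
    (hpsd : ∀ x v, 0 ≤ v ⬝ᵥ (Λ x *ᵥ v)) (u v : Fin n → ℝ) :
    0 ≤ (g u - g v) ⬝ᵥ (u - v) := by
  set d := u - v with hd
  have hφ : ∀ s : ℝ, HasDerivAt (fun σ : ℝ => g (v + σ • d) ⬝ᵥ d) ((Λ (v + s • d) *ᵥ d) ⬝ᵥ d) s :=
    gdot_aux hΛ v d d
  have hmono : Monotone (fun σ : ℝ => g (v + σ • d) ⬝ᵥ d) := by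
    refine monotone_of_deriv_nonneg (fun s => (hφ s).differentiableAt) (fun s => ?_)
    rw [(hφ s).deriv, dotProduct_comm]
    exact hpsd _ _
  have h01 := hmono (zero_le_one' ℝ)
  simp only [zero_smul, add_zero, one_smul, hd, add_sub_cancel] at h01
  rw [sub_dotProduct]
  linarith

lemma Lline_aux {L : (Fin n → ℝ) → ℝ}
    (hg : ∀ x v, HasDerivAt (fun t : ℝ => L (x + t • v)) (g x ⬝ᵥ v) 0)
    (p u : Fin n → ℝ) (s : ℝ) :
    HasDerivAt (fun σ : ℝ => L (p + σ • u)) (g (p + s • u) ⬝ᵥ u) s := by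
  have h0 := hg (p + s • u) u
  have h1 : HasDerivAt (fun σ : ℝ => σ - s) 1 s := (hasDerivAt_id s).sub_const s
  have h2 := HasDerivAt.comp (h := fun σ : ℝ => σ - s) (x := s) (by simpa using h0) h1
  have heq : ∀ σ : ℝ, p + s • u + (σ - s) • u = p + σ • u := fun σ => by
    rw [sub_smul]; abel
  simpa [Function.comp_def, heq] using h2

lemma gradineq_aux {L : (Fin n → ℝ) → ℝ}
    (hg : ∀ x v, HasDerivAt (fun t : ℝ => L (x + t • v)) (g x ⬝ᵥ v) 0)
    (hΛ : ∀ x v, HasDerivAt (fun t : ℝ => g (x + t • v)) (Λ x *ᵥ v) 0)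
    (hpsd : ∀ x v, 0 ≤ v ⬝ᵥ (Λ x *ᵥ v)) (u v : Fin n → ℝ) :
    g v ⬝ᵥ (u - v) ≤ L u - L v := by
  set d := u - v with hd
  have hψ : ∀ s : ℝ, HasDerivAt (fun σ : ℝ => L (v + σ • d)) (g (v + s • d) ⬝ᵥ d) s :=
    Lline_aux hg v d
  obtain ⟨c, hc, hceq⟩ := exists_hasDerivAt_eq_slope (fun σ : ℝ => L (v + σ • d))
    (fun s => g (v + s • d) ⬝ᵥ d) zero_lt_one
    (fun s _ => (hψ s).differentiableAt.continuousAt.continuousWithinAt)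
    (fun s _ => hψ s)
  simp only [one_smul, zero_smul, add_zero, sub_zero, div_one, hd, add_sub_cancel] at hceq
  have hmono := mono_aux hΛ hpsd (v + c • d) v
  simp only [add_sub_cancel_left] at hmono
  simp only [sub_dotProduct, dotProduct_smul, smul_eq_mul] at hmono
  have hc0 : (0:ℝ) < c := hc.1
  have : g v ⬝ᵥ d ≤ g (v + c • d) ⬝ᵥ d := by
    nlinarith [hmono]
  calc g v ⬝ᵥ d ≤ g (v + c • d) ⬝ᵥ d := this
    _ = L u - L v := hceq

set_option maxHeartbeats 1600000 in
lemma keyB_aux (hΛ : ∀ x v, HasDerivAt (fun t : ℝ => g (x + t • v)) (Λ x *ᵥ v) 0)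
    (hpsd : ∀ x v, 0 ≤ v ⬝ᵥ (Λ x *ᵥ v)) (x x' : ℝ → Fin n → ℝ) (t : ℝ)
    (hx : HasDerivAt x (x' t) t) :
    HasDerivAt (fun s => g (x s)) (Λ (x t) *ᵥ x' t) t := by
  set y := x t with hy
  set w := x' t with hw
  set N : ℝ := (n : ℝ) + 1 with hN
  have hN1 : 1 ≤ N := le_add_of_nonneg_left (Nat.cast_nonneg n)
  have hN0 : 0 < N := lt_of_lt_of_le one_pos hN1
  set M : ℝ := (∑ i, ∑ j, |Λ y i j|) + 1 with hM
  have hM1 : 1 ≤ M :=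
    le_add_of_nonneg_left (Finset.sum_nonneg fun i _ => Finset.sum_nonneg fun j _ => abs_nonneg _)
  have hM0 : 0 < M := lt_of_lt_of_le one_pos hM1
  have hDnorm : ∀ u : Fin n → ℝ, ‖Λ y *ᵥ u‖ ≤ M * ‖u‖ := by
    intro u
    rw [pi_norm_le_iff_of_nonneg (by positivity)]
    intro i
    calc ‖(Λ y *ᵥ u) i‖ = |∑ j, Λ y i j * u j| := by
          simp [Matrix.mulVec, dotProduct, Real.norm_eq_abs]
      _ ≤ ∑ j, |Λ y i j * u j| := Finset.abs_sum_le_sum_abs _ _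
      _ ≤ ∑ j, |Λ y i j| * ‖u‖ := Finset.sum_le_sum fun j _ => by
          rw [abs_mul]; exact mul_le_mul_of_nonneg_left (norm_le_pi_norm u j) (abs_nonneg _)
      _ = (∑ j, |Λ y i j|) * ‖u‖ := by rw [Finset.sum_mul]
      _ ≤ M * ‖u‖ := by
          refine mul_le_mul_of_nonneg_right ?_ (norm_nonneg _)
          have h1 : (∑ j, |Λ y i j|) ≤ ∑ i', ∑ j, |Λ y i' j| :=
            Finset.single_le_sum (f := fun i' => ∑ j, |Λ y i' j|)
              (fun i' _ => Finset.sum_nonneg fun j _ => abs_nonneg _) (Finset.mem_univ i)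
          rw [hM]; linarith
  have hEo : ∀ u : Fin n → ℝ,
      (fun s => g (y + (s - t) • u) - g y - (s - t) • (Λ y *ᵥ u)) =o[𝓝 t] fun s => s - t := by
    intro u
    have h1 : HasDerivAt (fun σ : ℝ => σ - t) 1 t := (hasDerivAt_id t).sub_const t
    have h2 := HasDerivAt.scomp (h := fun σ : ℝ => σ - t) (x := t) (by simpa using hΛ y u) h1
    have h0 : HasDerivAt (fun s : ℝ => g (y + (s - t) • u)) (Λ y *ᵥ u) t := by
      simpa [Function.comp_def] using h2
    simpa using hasDerivAt_iff_isLittleO.mp h0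
  have hr : (fun s => x s - y - (s - t) • w) =o[𝓝 t] fun s => s - t := by
    simpa using hasDerivAt_iff_isLittleO.mp hx
  clear_value y w
  rw [hasDerivAt_iff_isLittleO, isLittleO_iff]
  simp only [← hy]
  intro c hc
  set ε : ℝ := c / (8 * N * M) with hε
  have hε0 : 0 < ε := by rw [hε]; positivity
  set δ : ℝ := min (ε / (4 * N)) (c / (8 * N * M)) with hδ
  have hδ0 : 0 < δ := lt_min (by positivity) (by positivity)
  have f1 : N * δ ≤ ε / 4 := by
    have h1 : δ ≤ ε / (4 * N) := min_le_left _ _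
    have := mul_le_mul_of_nonneg_left h1 (le_of_lt hN0)
    rw [div_mul_eq_div_div] at this
    calc N * δ ≤ N * (ε / 4 / N) := this
      _ = ε / 4 := by field_simp
  have f2 : N * M * δ ≤ c / 8 := by
    have h1 : δ ≤ c / (8 * N * M) := min_le_right _ _
    have := mul_le_mul_of_nonneg_left h1 (by positivity : (0:ℝ) ≤ N * M)
    calc N * M * δ ≤ N * M * (c / (8 * N * M)) := this
      _ = c / 8 := by field_simp
  have f3 : N * M * ε = c / 8 := by rw [hε]; field_simp
  have fδε : δ ≤ ε := by
    refine le_trans (min_le_left _ _) ?_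
    exact div_le_self (le_of_lt hε0) (by linarith)
  have hNM : 1 ≤ N * M := by nlinarith [hN1, hM1]
  have fεc : ε ≤ c / 8 := by
    rw [hε, div_le_div_iff₀ (by positivity) (by positivity)]
    nlinarith [le_of_lt hc, hNM]
  have fδc : δ ≤ c / 8 := by
    refine le_trans (min_le_right _ _) ?_
    rw [div_le_div_iff₀ (by positivity) (by positivity)]
    nlinarith [le_of_lt hc, hNM]
  clear_value N M ε δ
  -- pointwise key inequality
  have key : ∀ s : ℝ, ∀ q : Fin n → ℝ, ‖q‖ ≤ ε →
      ‖x s - y - (s - t) • w‖ ≤ δ * |s - t| →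
      ‖g (y + (s - t) • (w - q)) - g y - (s - t) • (Λ y *ᵥ (w - q))‖ ≤ δ * |s - t| →
      -((s - t) * ((g (x s) - g y - (s - t) • (Λ y *ᵥ w)) ⬝ᵥ q)) ≤
        N * ‖g (x s) - g y - (s - t) • (Λ y *ᵥ w)‖ * (δ * |s - t|)
        + N * M * ε * δ * |s - t| ^ 2 + N * M * ε * ε * |s - t| ^ 2
        + N * δ * δ * |s - t| ^ 2 + N * δ * ε * |s - t| ^ 2 := by
    intro s q hq hrs hEs
    set h : ℝ := s - t with hh
    set a : Fin n → ℝ := g (x s) - g y - h • (Λ y *ᵥ w) with hadef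
    set r : Fin n → ℝ := x s - y - h • w with hrdef
    set E : Fin n → ℝ := g (y + h • (w - q)) - g y - h • (Λ y *ᵥ (w - q)) with hEdef
    have hm := mono_aux hΛ hpsd (x s) (y + h • (w - q))
    have hv1 : g (x s) - g (y + h • (w - q)) = a + h • (Λ y *ᵥ q) - E := by
      rw [hadef, hEdef]; simp only [Matrix.mulVec_sub, smul_sub]; abel
    have hv2 : x s - (y + h • (w - q)) = r + h • q := by
      rw [hrdef]; simp only [smul_sub]; abel
    rw [hv1, hv2] at hm
    have hexp : (a + h • (Λ y *ᵥ q) - E) ⬝ᵥ (r + h • q)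
        = a ⬝ᵥ r + h * (a ⬝ᵥ q) + h * ((Λ y *ᵥ q) ⬝ᵥ r) + h ^ 2 * ((Λ y *ᵥ q) ⬝ᵥ q)
          - E ⬝ᵥ r - h * (E ⬝ᵥ q) := by
      simp only [add_dotProduct, sub_dotProduct, dotProduct_add,
        smul_dotProduct, dotProduct_smul, smul_eq_mul]
      ring
    rw [hexp] at hm
    clear_value a r E
    have hDq : ‖Λ y *ᵥ q‖ ≤ M * ε := by
      refine le_trans (hDnorm q) ?_
      exact mul_le_mul_of_nonneg_left hq (le_of_lt hM0)
    have b1 : |a ⬝ᵥ r| ≤ N * ‖a‖ * (δ * |h|) := by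
      refine le_trans (dot_bound a r) ?_
      rw [← hN]
      exact mul_le_mul_of_nonneg_left hrs (mul_nonneg (le_of_lt hN0) (norm_nonneg _))
    have b2 : |(Λ y *ᵥ q) ⬝ᵥ r| ≤ N * (M * ε) * (δ * |h|) := by
      refine le_trans (dot_bound _ _) ?_
      rw [← hN]
      calc N * ‖Λ y *ᵥ q‖ * ‖r‖ ≤ N * (M * ε) * ‖r‖ :=
            mul_le_mul_of_nonneg_right
              (mul_le_mul_of_nonneg_left hDq (le_of_lt hN0)) (norm_nonneg _)
        _ ≤ N * (M * ε) * (δ * |h|) := mul_le_mul_of_nonneg_left hrs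
            (mul_nonneg (le_of_lt hN0) (mul_nonneg (le_of_lt hM0) (le_of_lt hε0)))
    have b3 : |(Λ y *ᵥ q) ⬝ᵥ q| ≤ N * (M * ε) * ε := by
      refine le_trans (dot_bound _ _) ?_
      rw [← hN]
      calc N * ‖Λ y *ᵥ q‖ * ‖q‖ ≤ N * (M * ε) * ‖q‖ :=
            mul_le_mul_of_nonneg_right
              (mul_le_mul_of_nonneg_left hDq (le_of_lt hN0)) (norm_nonneg _)
        _ ≤ N * (M * ε) * ε := mul_le_mul_of_nonneg_left hq
            (mul_nonneg (le_of_lt hN0) (mul_nonneg (le_of_lt hM0) (le_of_lt hε0)))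
    have b4 : |E ⬝ᵥ r| ≤ N * (δ * |h|) * (δ * |h|) := by
      refine le_trans (dot_bound _ _) ?_
      rw [← hN]
      calc N * ‖E‖ * ‖r‖ ≤ N * (δ * |h|) * ‖r‖ :=
            mul_le_mul_of_nonneg_right (mul_le_mul_of_nonneg_left hEs (le_of_lt hN0))
              (norm_nonneg _)
        _ ≤ N * (δ * |h|) * (δ * |h|) := mul_le_mul_of_nonneg_left hrs
            (mul_nonneg (le_of_lt hN0) (mul_nonneg (le_of_lt hδ0) (abs_nonneg _)))
    have b5 : |E ⬝ᵥ q| ≤ N * (δ * |h|) * ε := by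
      refine le_trans (dot_bound _ _) ?_
      rw [← hN]
      calc N * ‖E‖ * ‖q‖ ≤ N * (δ * |h|) * ‖q‖ :=
            mul_le_mul_of_nonneg_right (mul_le_mul_of_nonneg_left hEs (le_of_lt hN0))
              (norm_nonneg _)
        _ ≤ N * (δ * |h|) * ε := mul_le_mul_of_nonneg_left hq
            (mul_nonneg (le_of_lt hN0) (mul_nonneg (le_of_lt hδ0) (abs_nonneg _)))
    have e1 : a ⬝ᵥ r ≤ |a ⬝ᵥ r| := le_abs_self _
    have e2 : h * ((Λ y *ᵥ q) ⬝ᵥ r) ≤ |h| * |(Λ y *ᵥ q) ⬝ᵥ r| := by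
      rw [← abs_mul]; exact le_abs_self _
    have e3 : h ^ 2 * ((Λ y *ᵥ q) ⬝ᵥ q) ≤ |h| ^ 2 * |(Λ y *ᵥ q) ⬝ᵥ q| := by
      rw [← abs_pow, ← abs_mul]; exact le_abs_self _
    have e4 : -(E ⬝ᵥ r) ≤ |E ⬝ᵥ r| := neg_le_abs _
    have e5 : -(h * (E ⬝ᵥ q)) ≤ |h| * |E ⬝ᵥ q| := by
      rw [← abs_mul]; exact neg_le_abs _
    have c2 : |h| * |(Λ y *ᵥ q) ⬝ᵥ r| ≤ |h| * (N * (M * ε) * (δ * |h|)) :=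
      mul_le_mul_of_nonneg_left b2 (abs_nonneg h)
    have c3 : |h| ^ 2 * |(Λ y *ᵥ q) ⬝ᵥ q| ≤ |h| ^ 2 * (N * (M * ε) * ε) :=
      mul_le_mul_of_nonneg_left b3 (sq_nonneg _)
    have c5 : |h| * |E ⬝ᵥ q| ≤ |h| * (N * (δ * |h|) * ε) :=
      mul_le_mul_of_nonneg_left b5 (abs_nonneg h)
    have g2 : |h| * (N * (M * ε) * (δ * |h|)) = N * M * ε * δ * |h| ^ 2 := by ring
    have g3 : |h| ^ 2 * (N * (M * ε) * ε) = N * M * ε * ε * |h| ^ 2 := by ring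
    have g4 : N * (δ * |h|) * (δ * |h|) = N * δ * δ * |h| ^ 2 := by ring
    have g5 : |h| * (N * (δ * |h|) * ε) = N * δ * ε * |h| ^ 2 := by ring
    linarith [hm, e1, e2, e3, e4, e5, b1, b4, c2, c3, c5]
  -- eventual bounds
  have hrev : ∀ᶠ s in 𝓝 t, ‖x s - y - (s - t) • w‖ ≤ δ * |s - t| := by
    have := hr.def hδ0
    simpa [Real.norm_eq_abs] using this
  have hEev : ∀ᶠ s in 𝓝 t, ∀ i : Fin n,
      ‖g (y + (s - t) • (w - Pi.single i ε)) - g y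
        - (s - t) • (Λ y *ᵥ (w - Pi.single i ε))‖ ≤ δ * |s - t| ∧
      ‖g (y + (s - t) • (w - -Pi.single i ε)) - g y
        - (s - t) • (Λ y *ᵥ (w - -Pi.single i ε))‖ ≤ δ * |s - t| := by
    rw [eventually_all]
    intro i
    have e1 := (hEo (w - Pi.single i ε)).def hδ0
    have e2 := (hEo (w - -Pi.single i ε)).def hδ0
    simp only [Real.norm_eq_abs] at e1 e2
    exact e1.and e2
  filter_upwards [hrev, hEev] with s hrs hEs
  set a : Fin n → ℝ := g (x s) - g y - (s - t) • (Λ y *ᵥ w) with hadef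
  clear_value a
  rw [eq_comm] at hadef
  rcases eq_or_ne s t with hst | hst
  · have ha0 : a = 0 := by rw [← hadef, hst, hy]; simp
    rw [ha0, hst]
    simp
  · have hst' : 0 < |s - t| := abs_pos.mpr (sub_ne_zero_of_ne hst)
    have hcomp : ∀ i : Fin n, |a i| ≤ (1/4) * ‖a‖ + (c/2) * |s - t| := by
      intro i
      have hq1 : ‖(Pi.single i ε : Fin n → ℝ)‖ ≤ ε := by
        rw [Pi.norm_single, Real.norm_eq_abs, abs_of_pos hε0]
      have hq2 : ‖(-Pi.single i ε : Fin n → ℝ)‖ ≤ ε := by rwa [norm_neg]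
      have k1a := key s (Pi.single i ε)
      have k1b := k1a hq1
      have k1c := k1b hrs
      have k1 := k1c (hEs i).1
      have k2a := key s (-Pi.single i ε)
      have k2b := k2a hq2
      have k2c := k2b hrs
      have k2 := k2c (hEs i).2
      clear k1a k1b k1c k2a k2b k2c
      rw [hadef] at k1 k2
      rw [dotProduct_single] at k1
      rw [dotProduct_neg, dotProduct_single] at k2
      -- |(s-t) * (a i * ε)| is bounded by RHS
      set R : ℝ := N * ‖a‖ * (δ * |s - t|)
        + N * M * ε * δ * |s - t| ^ 2 + N * M * ε * ε * |s - t| ^ 2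
        + N * δ * δ * |s - t| ^ 2 + N * δ * ε * |s - t| ^ 2 with hR
    
      have habs : |(s - t) * (a i * ε)| ≤ R := by
        rw [abs_le]
        constructor
        · linarith [k1]
        · linarith [k2]
      have hRle : R ≤ ((1/4) * ‖a‖ + (c/2) * |s - t|) * (|s - t| * ε) := by
        rw [hR]
        have hsq : (0:ℝ) ≤ |s - t| ^ 2 := sq_nonneg _
        have hεsq : (0:ℝ) ≤ ε * |s - t| ^ 2 := mul_nonneg (le_of_lt hε0) hsq
        have hcε : (0:ℝ) ≤ c * ε * |s - t| ^ 2 :=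
          mul_nonneg (mul_nonneg (le_of_lt hc) (le_of_lt hε0)) hsq
        have t1 : N * ‖a‖ * (δ * |s - t|) ≤ ε / 4 * ‖a‖ * |s - t| := by
          calc N * ‖a‖ * (δ * |s - t|) = N * δ * (‖a‖ * |s - t|) := by ring
            _ ≤ ε / 4 * (‖a‖ * |s - t|) :=
                mul_le_mul_of_nonneg_right f1 (mul_nonneg (norm_nonneg _) (abs_nonneg _))
            _ = ε / 4 * ‖a‖ * |s - t| := by ring
        have t2 : N * M * ε * δ * |s - t| ^ 2 ≤ c / 8 * ε * |s - t| ^ 2 := by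
          calc N * M * ε * δ * |s - t| ^ 2 = N * M * δ * (ε * |s - t| ^ 2) := by ring
            _ ≤ c / 8 * (ε * |s - t| ^ 2) := mul_le_mul_of_nonneg_right f2 hεsq
            _ = c / 8 * ε * |s - t| ^ 2 := by ring
        have t3 : N * M * ε * ε * |s - t| ^ 2 ≤ c / 8 * ε * |s - t| ^ 2 :=
          le_of_eq (by linear_combination (ε * |s - t| ^ 2) * f3)
        have t4 : N * δ * δ * |s - t| ^ 2 ≤ c / 8 * ε * |s - t| ^ 2 := by
          calc N * δ * δ * |s - t| ^ 2 = N * δ * (δ * |s - t| ^ 2) := by ring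
            _ ≤ ε / 4 * (δ * |s - t| ^ 2) :=
                mul_le_mul_of_nonneg_right f1 (mul_nonneg (le_of_lt hδ0) hsq)
            _ ≤ ε / 4 * (c / 8 * |s - t| ^ 2) :=
                mul_le_mul_of_nonneg_left (mul_le_mul_of_nonneg_right fδc hsq)
                  (div_nonneg (le_of_lt hε0) (by norm_num))
            _ ≤ c / 8 * ε * |s - t| ^ 2 := by linarith [hcε]
        have t5 : N * δ * ε * |s - t| ^ 2 ≤ c / 8 * ε * |s - t| ^ 2 := by
          calc N * δ * ε * |s - t| ^ 2 = N * δ * (ε * |s - t| ^ 2) := by ring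
            _ ≤ ε / 4 * (ε * |s - t| ^ 2) := mul_le_mul_of_nonneg_right f1 hεsq
            _ ≤ ε / 4 * (c / 8 * |s - t| ^ 2) :=
                mul_le_mul_of_nonneg_left (mul_le_mul_of_nonneg_right fεc hsq)
                  (div_nonneg (le_of_lt hε0) (by norm_num))
            _ ≤ c / 8 * ε * |s - t| ^ 2 := by linarith [hcε]
        linarith [t1, t2, t3, t4, t5]
      have hfin : |a i| * (|s - t| * ε) ≤ ((1/4) * ‖a‖ + (c/2) * |s - t|) * (|s - t| * ε) := by
        refine le_trans ?_ (le_trans habs hRle)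
        rw [abs_mul, abs_mul, abs_of_pos hε0]
        ring_nf
        exact le_refl _
      exact le_of_mul_le_mul_right hfin (mul_pos hst' hε0)
    have hnorm : ‖a‖ ≤ (1/4) * ‖a‖ + (c/2) * |s - t| := by
      have h0 : 0 ≤ (1/4) * ‖a‖ + (c/2) * |s - t| :=
        add_nonneg (mul_nonneg (by norm_num) (norm_nonneg _))
          (mul_nonneg (by linarith : (0:ℝ) ≤ c/2) (abs_nonneg _))
      rw [pi_norm_le_iff_of_nonneg h0]
      intro i
      rw [Real.norm_eq_abs]
      exact hcomp i
    rw [Real.norm_eq_abs]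
    have : ‖a‖ ≤ (2*c/3) * |s - t| := by linarith
    refine le_trans this ?_
    have : (2*c/3) * |s - t| ≤ c * |s - t| := by nlinarith [hc, abs_nonneg (s - t)]
    exact this

set_option maxHeartbeats 1000000 in
lemma keyA_aux {L : (Fin n → ℝ) → ℝ}
    (hg : ∀ x v, HasDerivAt (fun t : ℝ => L (x + t • v)) (g x ⬝ᵥ v) 0)
    (hΛ : ∀ x v, HasDerivAt (fun t : ℝ => g (x + t • v)) (Λ x *ᵥ v) 0)
    (hpsd : ∀ x v, 0 ≤ v ⬝ᵥ (Λ x *ᵥ v)) (x x' : ℝ → Fin n → ℝ) (t : ℝ)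
    (hx : HasDerivAt x (x' t) t) :
    HasDerivAt (fun s => L (x s)) (g (x t) ⬝ᵥ x' t) t := by
  set y := x t with hy
  set w := x' t with hw
  have hgx : HasDerivAt (fun s => g (x s)) (Λ y *ᵥ w) t := keyB_aux hΛ hpsd x x' t hx
  have hr : (fun s => x s - y - (s - t) • w) =o[𝓝 t] fun s => s - t := by
    simpa using hasDerivAt_iff_isLittleO.mp hx
  clear_value y w
  have hc0 : Tendsto (fun s => g (x s) - g y) (𝓝 t) (𝓝 0) := by
    have h1 := hgx.continuousAt.tendsto.sub (tendsto_const_nhds (x := g y))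
    simpa [hy] using h1
  set Nn : ℝ := (n : ℝ) + 1 with hNn
  have hNn0 : 0 < Nn := by rw [hNn]; positivity
  set P : ℝ := Nn * (‖g y‖ + 1) with hP
  have hP0 : 0 < P := by rw [hP]; positivity
  set Q : ℝ := Nn * (‖w‖ + 1) with hQ
  have hQ0 : 0 < Q := by rw [hQ]; positivity
  have hgyP : Nn * ‖g y‖ ≤ P := by rw [hP]; nlinarith [norm_nonneg (g y), hNn0]
  rw [hasDerivAt_iff_isLittleO, isLittleO_iff]
  simp only [← hy]
  intro c hc
  set δa : ℝ := c / (2 * P) with hδa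
  have hδa0 : 0 < δa := by rw [hδa]; positivity
  have hPδa : P * δa = c / 2 := by rw [hδa]; field_simp
  set δb : ℝ := c / (2 * Q) with hδb
  have hδb0 : 0 < δb := by rw [hδb]; positivity
  have hQδb : Q * δb = c / 2 := by rw [hδb]; field_simp
  clear_value δa δb P Q Nn
  have hrev : ∀ᶠ s in 𝓝 t, ‖x s - y - (s - t) • w‖ ≤ δa * |s - t| := by
    have := hr.def hδa0
    simpa [Real.norm_eq_abs] using this
  have hKev : ∀ᶠ s in 𝓝 t, ‖x s - y‖ ≤ (‖w‖ + 1) * |s - t| := by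
    have h1 := hr.def one_pos
    filter_upwards [h1] with s hs
    have e : x s - y = (x s - y - (s - t) • w) + (s - t) • w := by abel
    rw [e]
    refine le_trans (norm_add_le _ _) ?_
    rw [norm_smul, Real.norm_eq_abs]
    rw [Real.norm_eq_abs] at hs
    nlinarith [abs_nonneg (s - t), norm_nonneg w, hs]
  have hgev : ∀ᶠ s in 𝓝 t, ‖g (x s) - g y‖ ≤ δb :=
    (NormedAddCommGroup.tendsto_nhds_zero.mp hc0 δb hδb0).mono fun s hs => le_of_lt hs
  filter_upwards [hrev, hKev, hgev] with s h1 h2 h3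
  rw [Real.norm_eq_abs, Real.norm_eq_abs, smul_eq_mul]
  have glow := gradineq_aux hg hΛ hpsd (x s) y
  have gup0 := gradineq_aux hg hΛ hpsd y (x s)
  have gup : L (x s) - L y ≤ g (x s) ⬝ᵥ (x s - y) := by
    rw [show y - x s = -(x s - y) from (neg_sub _ _).symm, dotProduct_neg] at gup0
    linarith
  -- rewrite dot products
  have e1 : g y ⬝ᵥ (x s - y - (s - t) • w)
      = g y ⬝ᵥ (x s - y) - (s - t) * (g y ⬝ᵥ w) := by
    rw [dotProduct_sub, dotProduct_smul, smul_eq_mul]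
  have e2 : (g (x s) - g y) ⬝ᵥ (x s - y) = g (x s) ⬝ᵥ (x s - y) - g y ⬝ᵥ (x s - y) :=
    sub_dotProduct _ _ _
  -- bounds
  have b1 : |g y ⬝ᵥ (x s - y - (s - t) • w)| ≤ c / 2 * |s - t| := by
    refine le_trans (dot_bound _ _) ?_
    rw [← hNn]
    calc Nn * ‖g y‖ * ‖x s - y - (s - t) • w‖ ≤ Nn * ‖g y‖ * (δa * |s - t|) := by
          exact mul_le_mul_of_nonneg_left h1 (by positivity)
      _ ≤ P * (δa * |s - t|) := by
          exact mul_le_mul_of_nonneg_right hgyP (by positivity)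
      _ = c / 2 * |s - t| := by rw [← mul_assoc, hPδa]
  have b2 : |(g (x s) - g y) ⬝ᵥ (x s - y)| ≤ c / 2 * |s - t| := by
    refine le_trans (dot_bound _ _) ?_
    rw [← hNn]
    calc Nn * ‖g (x s) - g y‖ * ‖x s - y‖ ≤ Nn * δb * ‖x s - y‖ := by
          exact mul_le_mul_of_nonneg_right
            (mul_le_mul_of_nonneg_left h3 (le_of_lt hNn0)) (norm_nonneg _)
      _ ≤ Nn * δb * ((‖w‖ + 1) * |s - t|) := by
          exact mul_le_mul_of_nonneg_left h2 (by positivity)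
      _ = Q * δb * |s - t| := by rw [hQ]; ring
      _ = c / 2 * |s - t| := by rw [hQδb]
  rw [abs_le]
  constructor
  · have : -(c / 2 * |s - t|) ≤ g y ⬝ᵥ (x s - y - (s - t) • w) := neg_le_of_abs_le b1
    rw [e1] at this
    nlinarith [glow, abs_nonneg (s - t), hc]
  · have hu1 : g y ⬝ᵥ (x s - y - (s - t) • w) ≤ c / 2 * |s - t| := le_of_abs_le b1
    have hu2 : (g (x s) - g y) ⬝ᵥ (x s - y) ≤ c / 2 * |s - t| := le_of_abs_le b2
    rw [e1] at hu1
    rw [e2] at hu2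
    linarith [gup]

end HopfieldAux

/-- For the Hopfield dynamics `ẋ = W g(x) - x + b` with `g = ∇L`, symmetric `W` and
positive semidefinite Hessian `Λ = ∇²L`, the energy
`E_H(x) = (x - b)ᵀ g(x) - L(x) - ½ g(x)ᵀ W g(x)` satisfies
`dE_H/dt = -ẋᵀ Λ(x) ẋ ≤ 0` along trajectories. -/
theorem hopfield_energy_lyapunov {n : ℕ}
    (L : (Fin n → ℝ) → ℝ) (g : (Fin n → ℝ) → Fin n → ℝ)
    (Λ : (Fin n → ℝ) → Matrix (Fin n) (Fin n) ℝ)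
    (W : Matrix (Fin n) (Fin n) ℝ) (b : Fin n → ℝ)
    (hW : Wᵀ = W)
    -- g is the gradient of L
    (hg : ∀ x v, HasDerivAt (fun t : ℝ => L (x + t • v)) (g x ⬝ᵥ v) 0)
    -- Λ is the Hessian of L (Jacobian of g)
    (hΛ : ∀ x v, HasDerivAt (fun t : ℝ => g (x + t • v)) (Λ x *ᵥ v) 0)
    (hΛsymm : ∀ x, (Λ x)ᵀ = Λ x)
    -- the Hessian is positive semidefinite everywhere
    (hpsd : ∀ x v, 0 ≤ v ⬝ᵥ (Λ x *ᵥ v))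
    (x x' : ℝ → Fin n → ℝ)
    (hx : ∀ t, HasDerivAt x (x' t) t)
    (hdyn : ∀ t, x' t = W *ᵥ g (x t) - x t + b) :
    ∀ t, HasDerivAt
        (fun s => (x s - b) ⬝ᵥ g (x s) - L (x s) - (1 / 2) * (g (x s) ⬝ᵥ (W *ᵥ g (x s))))
        (-(x' t ⬝ᵥ (Λ (x t) *ᵥ x' t))) t ∧
      -(x' t ⬝ᵥ (Λ (x t) *ᵥ x' t)) ≤ 0 := by
  intro t
  have hB : HasDerivAt (fun s => g (x s)) (Λ (x t) *ᵥ x' t) t := keyB_aux hΛ hpsd x x' t (hx t)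
  have hA : HasDerivAt (fun s => L (x s)) (g (x t) ⬝ᵥ x' t) t :=
    keyA_aux hg hΛ hpsd x x' t (hx t)
  have h1 : HasDerivAt (fun s => (x s - b) ⬝ᵥ g (x s))
      (x' t ⬝ᵥ g (x t) + (x t - b) ⬝ᵥ (Λ (x t) *ᵥ x' t)) t :=
    hasDerivAt_dot ((hx t).sub_const b) hB
  have h3 : HasDerivAt (fun s => g (x s) ⬝ᵥ (W *ᵥ g (x s)))
      ((Λ (x t) *ᵥ x' t) ⬝ᵥ (W *ᵥ g (x t)) + g (x t) ⬝ᵥ (W *ᵥ (Λ (x t) *ᵥ x' t))) t :=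
    hasDerivAt_dot hB (hasDerivAt_mulVec W hB)
  have htot := (h1.sub hA).sub (h3.const_mul (1/2 : ℝ))
  refine ⟨?_, neg_nonpos.mpr (hpsd _ _)⟩
  convert htot using 1
  case e'_4 => rfl
  case e'_5 => rfl
  case e'_8 => rfl
  have hxb : x t - b = W *ᵥ g (x t) - x' t := by rw [hdyn t]; abel
  have hsym : g (x t) ⬝ᵥ (W *ᵥ (Λ (x t) *ᵥ x' t))
      = (W *ᵥ g (x t)) ⬝ᵥ (Λ (x t) *ᵥ x' t) := by
    rw [Matrix.dotProduct_mulVec]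
    nth_rewrite 1 [← hW]
    rw [Matrix.vecMul_transpose]
  have hcomm1 : (Λ (x t) *ᵥ x' t) ⬝ᵥ (W *ᵥ g (x t))
      = (W *ᵥ g (x t)) ⬝ᵥ (Λ (x t) *ᵥ x' t) := dotProduct_comm _ _
  have hcomm2 : x' t ⬝ᵥ g (x t) = g (x t) ⬝ᵥ x' t := dotProduct_comm _ _
  have hexp : (x t - b) ⬝ᵥ (Λ (x t) *ᵥ x' t)
      = (W *ᵥ g (x t)) ⬝ᵥ (Λ (x t) *ᵥ x' t) - x' t ⬝ᵥ (Λ (x t) *ᵥ x' t) := by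
    rw [hxb, sub_dotProduct]
  rw [hsym, hcomm1, hcomm2, hexp]
  ring
end

section
/- Under the change of variables νᵢ(t) = exp(-Ωt) μᵢ(t) with a common skew-symmetric Ω, the generalized Kuramoto system μ̇ᵢ = Ωμᵢ - (I - μᵢμᵢᵀ) ∂E_K/∂μᵢ, where E_K depends only on scalar products, transforms into the constrained gradient flow ν̇ᵢ = -(I - νᵢνᵢᵀ) ∂E_K/∂νᵢ. -/
open scoped Matrix

open NormedSpace in
/-- Entrywise derivative of `s ↦ exp((-s)Ω)`. -/
lemma expNegEntry_hasDerivAt {n : ℕ} (Ω : Matrix (Fin n) (Fin n) ℝ) (t : ℝ) (k j : Fin n) :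
    HasDerivAt (fun s : ℝ => exp ((-s) • Ω) k j)
      ((exp ((-t) • Ω) * (-Ω)) k j) t := by
  letI : NormedRing (Matrix (Fin n) (Fin n) ℝ) := Matrix.linftyOpNormedRing
  letI : NormedAlgebra ℝ (Matrix (Fin n) (Fin n) ℝ) := Matrix.linftyOpNormedAlgebra
  have h1 : HasDerivAt (fun s : ℝ => exp (s • (-Ω))) (exp (t • (-Ω)) * (-Ω)) t :=
    hasDerivAt_exp_smul_const (-Ω) t
  let L : Matrix (Fin n) (Fin n) ℝ →ₗ[ℝ] ℝ :=
    { toFun := fun M => M k j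
      map_add' := fun _ _ => rfl
      map_smul' := fun _ _ => rfl }
  have := (LinearMap.toContinuousLinearMap L).hasFDerivAt.comp_hasDerivAt t h1
  simp only [smul_neg, neg_smul] at this ⊢
  exact this

open NormedSpace in
lemma expNeg_orthogonal {n : ℕ} (Ω : Matrix (Fin n) (Fin n) ℝ) (hΩ : Ωᵀ = -Ω) (t : ℝ) :
    (exp ((-t) • Ω))ᵀ * exp ((-t) • Ω) = 1 := by
  letI : NormedRing (Matrix (Fin n) (Fin n) ℝ) := Matrix.linftyOpNormedRing
  letI : NormedAlgebra ℝ (Matrix (Fin n) (Fin n) ℝ) := Matrix.linftyOpNormedAlgebra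
  rw [← Matrix.exp_transpose, Matrix.transpose_smul, hΩ, smul_neg, neg_smul, neg_neg,
    ← Matrix.exp_add_of_commute _ _ ((Commute.refl (t • Ω)).neg_right)]
  simp

lemma vecMulVec_mulVec' {n : ℕ} (a b g : Fin n → ℝ) :
    Matrix.vecMulVec a b *ᵥ g = (b ⬝ᵥ g) • a := by
  ext k
  simp only [Matrix.mulVec, Matrix.vecMulVec_apply, dotProduct, Pi.smul_apply,
    smul_eq_mul, Finset.sum_mul]
  exact Finset.sum_congr rfl fun j _ => by ring

/-- The gradient of a rotation-invariant energy is equivariant. -/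
lemma gradE_equivariant {N D : ℕ}
    (E : (Fin N → Fin (D + 1) → ℝ) → ℝ)
    (gradE : (Fin N → Fin (D + 1) → ℝ) → Fin N → Fin (D + 1) → ℝ)
    (hgrad : ∀ μ ν : Fin N → Fin (D + 1) → ℝ,
      HasDerivAt (fun t : ℝ => E fun i => μ i + t • ν i) (∑ i, gradE μ i ⬝ᵥ ν i) 0)
    (hinv : ∀ R : Matrix (Fin (D + 1)) (Fin (D + 1)) ℝ, Rᵀ * R = 1 →
      ∀ μ : Fin N → Fin (D + 1) → ℝ, E (fun i => R *ᵥ μ i) = E μ)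
    (R : Matrix (Fin (D + 1)) (Fin (D + 1)) ℝ) (hR : Rᵀ * R = 1)
    (μ : Fin N → Fin (D + 1) → ℝ) (i : Fin N) :
    gradE (fun j => R *ᵥ μ j) i = R *ᵥ gradE μ i := by
  have key : ∀ ν : Fin N → Fin (D + 1) → ℝ,
      ∑ j, gradE (fun j => R *ᵥ μ j) j ⬝ᵥ (R *ᵥ ν j) = ∑ j, gradE μ j ⬝ᵥ ν j := by
    intro ν
    have h1 := hgrad (fun j => R *ᵥ μ j) (fun j => R *ᵥ ν j)
    have h2 := hgrad μ ν
    have he : (fun t : ℝ => E fun j => R *ᵥ μ j + t • (R *ᵥ ν j))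
        = fun t : ℝ => E fun j => μ j + t • ν j := by
      funext t
      rw [← hinv R hR (fun j => μ j + t • ν j)]
      congr 1
      funext j
      rw [Matrix.mulVec_add, Matrix.mulVec_smul]
    rw [he] at h1
    exact h1.unique h2
  have hRR : R * Rᵀ = 1 := mul_eq_one_comm.mp hR
  have hmain : Rᵀ *ᵥ gradE (fun j => R *ᵥ μ j) i = gradE μ i := by
    funext k
    have := key (Pi.single i (Pi.single k 1))
    rw [Finset.sum_eq_single i, Finset.sum_eq_single i] at this
    · simp only [Pi.single_eq_same] at this
      rw [Matrix.dotProduct_mulVec, ← Matrix.mulVec_transpose] at this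
      simpa using this
    · intro j _ hj; simp [Pi.single_eq_of_ne hj]
    · simp
    · intro j _ hj; simp [Pi.single_eq_of_ne hj, Matrix.mulVec_zero]
    · simp
  rw [← hmain, Matrix.mulVec_mulVec, hRR, Matrix.one_mulVec]

/-- Under the change of variables `νᵢ(t) = exp(-tΩ) μᵢ(t)` with a common
skew-symmetric `Ω`, the generalized Kuramoto system
`μ̇ᵢ = Ωμᵢ - (I - μᵢμᵢᵀ) ∂E_K/∂μᵢ`, where `E_K` is invariant under simultaneous
rotation of all its arguments (it depends only on scalar products), transforms into the
constrained gradient flow `ν̇ᵢ = -(I - νᵢνᵢᵀ) ∂E_K/∂νᵢ`. -/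
theorem kuramoto_rotating_frame {N D : ℕ}
    (E : (Fin N → Fin (D + 1) → ℝ) → ℝ)
    (gradE : (Fin N → Fin (D + 1) → ℝ) → Fin N → Fin (D + 1) → ℝ)
    (hgrad : ∀ μ ν : Fin N → Fin (D + 1) → ℝ,
      HasDerivAt (fun t : ℝ => E fun i => μ i + t • ν i) (∑ i, gradE μ i ⬝ᵥ ν i) 0)
    -- invariance under simultaneous rotations
    (hinv : ∀ R : Matrix (Fin (D + 1)) (Fin (D + 1)) ℝ, Rᵀ * R = 1 →
      ∀ μ : Fin N → Fin (D + 1) → ℝ, E (fun i => R *ᵥ μ i) = E μ)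
    (Ω : Matrix (Fin (D + 1)) (Fin (D + 1)) ℝ) (hΩ : Ωᵀ = -Ω)
    (μ : Fin N → ℝ → Fin (D + 1) → ℝ)
    (hdyn : ∀ i t, HasDerivAt (μ i)
      (Ω *ᵥ μ i t -
        ((1 : Matrix (Fin (D + 1)) (Fin (D + 1)) ℝ) - Matrix.vecMulVec (μ i t) (μ i t)) *ᵥ
          gradE (fun j => μ j t) i) t) :
    ∀ i t, HasDerivAt (fun s => NormedSpace.exp ((-s) • Ω) *ᵥ μ i s)
      (-(((1 : Matrix (Fin (D + 1)) (Fin (D + 1)) ℝ) -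
            Matrix.vecMulVec (NormedSpace.exp ((-t) • Ω) *ᵥ μ i t)
              (NormedSpace.exp ((-t) • Ω) *ᵥ μ i t)) *ᵥ
          gradE (fun j => NormedSpace.exp ((-t) • Ω) *ᵥ μ j t) i)) t := by
  intro i t
  set Et := NormedSpace.exp ((-t) • Ω) with hEt
  set a := μ i t with ha
  set g := gradE (fun j => μ j t) i with hg
  set d := Ω *ᵥ a -
      ((1 : Matrix (Fin (D + 1)) (Fin (D + 1)) ℝ) - Matrix.vecMulVec a a) *ᵥ g with hd
  have hR : Etᵀ * Et = 1 := expNeg_orthogonal Ω hΩ t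
  -- the derivative via product rule, componentwise
  have hder : HasDerivAt (fun s => NormedSpace.exp ((-s) • Ω) *ᵥ μ i s)
      ((Et * (-Ω)) *ᵥ a + Et *ᵥ d) t := by
    apply hasDerivAt_pi.mpr
    intro k
    have hsum : HasDerivAt (fun s => ∑ j, NormedSpace.exp ((-s) • Ω) k j * μ i s j)
        (∑ j, ((Et * (-Ω)) k j * a j + Et k j * d j)) t :=
      HasDerivAt.fun_sum fun j _ =>
        (expNegEntry_hasDerivAt Ω t k j).mul (hasDerivAt_pi.mp (hdyn i t) j)
    have h1 : ((Et * (-Ω)) *ᵥ a + Et *ᵥ d) k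
        = ∑ j, ((Et * (-Ω)) k j * a j + Et k j * d j) := by
      simp [Matrix.mulVec, dotProduct, Finset.sum_add_distrib]
    rw [h1]
    exact hsum
  -- identify the derivative
  have hgeq : gradE (fun j => Et *ᵥ μ j t) i = Et *ᵥ g :=
    gradE_equivariant E gradE hgrad hinv Et hR (fun j => μ j t) i
  have hdot : (Et *ᵥ a) ⬝ᵥ (Et *ᵥ g) = a ⬝ᵥ g := by
    rw [Matrix.dotProduct_mulVec, ← Matrix.mulVec_transpose, Matrix.mulVec_mulVec, hR,
      Matrix.one_mulVec]
  have heq : (Et * (-Ω)) *ᵥ a + Et *ᵥ d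
      = -(((1 : Matrix (Fin (D + 1)) (Fin (D + 1)) ℝ) -
            Matrix.vecMulVec (Et *ᵥ a) (Et *ᵥ a)) *ᵥ
          gradE (fun j => Et *ᵥ μ j t) i) := by
    rw [hgeq, Matrix.sub_mulVec, Matrix.one_mulVec, vecMulVec_mulVec', hdot, hd]
    rw [Matrix.sub_mulVec, Matrix.one_mulVec, vecMulVec_mulVec', Matrix.mulVec_sub,
      Matrix.mulVec_sub, Matrix.mulVec_smul, Matrix.mulVec_mulVec,
      Matrix.mul_neg, Matrix.neg_mulVec]
    abel
  rw [heq] at hder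
  exact hder
end
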